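/- In the abstract MMAD setting, assume the coercivity hypotheses (c(φ,φ) ≥ 0 on Φ; ⟨H w, w⟩ ≥ H₀‖w‖², ⟨K w, w⟩ ≥ K₀‖w‖² on W; ⟨A x, x⟩ ≥ A₀‖x‖² on X with H₀, K₀, A₀ > 0; some ε ∈ (0,1) with K₀ + H₀·(1 − 1/ε) > 0) and the continuity hypothesis (c, H, K, A bounded). Then for every bounded linear functional ℓ on Φ × G there exists a unique (φ,g) ∈ Φ × G such that B((φ,g),(ψ,h)) = ℓ(ψ,h) for all (ψ,h) ∈ Φ × G; that is, the MMAD variational problem is well-posed. -/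

import Mathlib

open scoped RealInnerProductSpace

/-- The continuous bilinear form `(w, v) ↦ ⟪H w, v⟫` on a real inner product space. -/
noncomputable def mmadInnerBilin {W : Type*} [NormedAddCommGroup W] [InnerProductSpace ℝ W]
    (H : W →L[ℝ] W) : W →L[ℝ] W →L[ℝ] ℝ :=
  LinearMap.mkContinuous₂
    (LinearMap.mk₂ ℝ (fun w v => ⟪H w, v⟫)
      (fun w w' v => by simp [inner_add_left])
      (fun r w v => by simp [inner_smul_left])
      (fun w v v' => inner_add_right _ _ _)
      (fun r w v => inner_smul_right _ _ _))
    ‖H‖ (fun w v => by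
      calc ‖(⟪H w, v⟫ : ℝ)‖ ≤ ‖H w‖ * ‖v‖ := norm_inner_le_norm _ _
        _ ≤ ‖H‖ * ‖w‖ * ‖v‖ := by gcongr; exact H.le_opNorm w)

@[simp] lemma mmadInnerBilin_apply {W : Type*} [NormedAddCommGroup W] [InnerProductSpace ℝ W]
    (H : W →L[ℝ] W) (w v : W) : mmadInnerBilin H w v = ⟪H w, v⟫ := rfl

set_option maxHeartbeats 1600000 in
/-- Well-posedness (Lax–Milgram) of the abstract MMAD variational problem: under the
coercivity hypotheses on `c`, `H`, `K`, `A` (with some `ε ∈ (0,1)` such that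
`K₀ + H₀(1 − 1/ε) > 0`), for every bounded linear functional `ℓ` on `Φ × G` there is a
unique `(φ,g) ∈ Φ × G` with `B((φ,g),(ψ,h)) = ℓ(ψ,h)` for all `(ψ,h) ∈ Φ × G`, where
`B((φ,g),(ψ,h)) = c(φ,ψ) + ⟨H(Dφ − jg), Dψ − jh⟩ + ⟨K(jg), jh⟩ + ⟨A(Eg), Eh⟩`. -/
theorem mmad_variational_problem_well_posed
    {Φ W X G : Type*}
    [NormedAddCommGroup Φ] [InnerProductSpace ℝ Φ] [CompleteSpace Φ]
    [NormedAddCommGroup W] [InnerProductSpace ℝ W] [CompleteSpace W]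
    [NormedAddCommGroup X] [InnerProductSpace ℝ X] [CompleteSpace X]
    [NormedAddCommGroup G] [InnerProductSpace ℝ G] [CompleteSpace G]
    (D : Φ →ₗᵢ[ℝ] W) (j : G →L[ℝ] W) (E : G →L[ℝ] X)
    (hG : ∀ g : G, ‖g‖ ^ 2 = ‖j g‖ ^ 2 + ‖E g‖ ^ 2)
    (c : Φ →L[ℝ] Φ →L[ℝ] ℝ)
    (H K : W →L[ℝ] W) (A : X →L[ℝ] X)
    (hHsa : IsSelfAdjoint H) (hKsa : IsSelfAdjoint K) (hAsa : IsSelfAdjoint A)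
    (H₀ K₀ A₀ ε : ℝ) (hH₀ : 0 < H₀) (hK₀ : 0 < K₀) (hA₀ : 0 < A₀)
    (hc : ∀ φ : Φ, 0 ≤ c φ φ)
    (hH : ∀ w : W, ⟪H w, w⟫ ≥ H₀ * ‖w‖ ^ 2)
    (hK : ∀ w : W, ⟪K w, w⟫ ≥ K₀ * ‖w‖ ^ 2)
    (hA : ∀ x : X, ⟪A x, x⟫ ≥ A₀ * ‖x‖ ^ 2)
    (hε₀ : 0 < ε) (hε₁ : ε < 1) (hKH : 0 < K₀ + H₀ * (1 - 1 / ε))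
    (ℓ : Φ × G →L[ℝ] ℝ) :
    ∃! p : Φ × G, ∀ q : Φ × G,
      c p.1 q.1 + ⟪H (D p.1 - j p.2), D q.1 - j q.2⟫ + ⟪K (j p.2), j q.2⟫ +
        ⟪A (E p.2), E q.2⟫ = ℓ q := by
  classical
  -- work on the `L²` product to get an inner product space
  let V := WithLp 2 (Φ × G)
  let e : V ≃L[ℝ] Φ × G := WithLp.prodContinuousLinearEquiv 2 ℝ Φ G
  let fst : Φ × G →L[ℝ] Φ := ContinuousLinearMap.fst ℝ Φ G
  let snd : Φ × G →L[ℝ] G := ContinuousLinearMap.snd ℝ Φ G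
  let T : Φ × G →L[ℝ] W := D.toContinuousLinearMap.comp fst - j.comp snd
  let B₀ : (Φ × G) →L[ℝ] (Φ × G) →L[ℝ] ℝ :=
    c.bilinearComp fst fst + (mmadInnerBilin H).bilinearComp T T
      + (mmadInnerBilin K).bilinearComp (j.comp snd) (j.comp snd)
      + (mmadInnerBilin A).bilinearComp (E.comp snd) (E.comp snd)
  have hB₀ : ∀ p q : Φ × G, B₀ p q =
      c p.1 q.1 + ⟪H (D p.1 - j p.2), D q.1 - j q.2⟫ + ⟪K (j p.2), j q.2⟫ +
        ⟪A (E p.2), E q.2⟫ := fun p q => rfl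
  let B : V →L[ℝ] V →L[ℝ] ℝ :=
    B₀.bilinearComp (e : V →L[ℝ] Φ × G) (e : V →L[ℝ] Φ × G)
  have hB : ∀ u w : V, B u w = B₀ (e u) (e w) := fun u w => rfl
  -- coercivity constant
  set C₀ : ℝ := min (min (H₀ * (1 - ε)) (K₀ + H₀ * (1 - 1 / ε))) A₀ with hC₀
  have hC₀pos : 0 < C₀ := by
    apply lt_min (lt_min _ hKH) hA₀
    exact mul_pos hH₀ (by linarith)
  have key : ∀ p : Φ × G, C₀ * (‖p.1‖ ^ 2 + ‖p.2‖ ^ 2) ≤ B₀ p p := by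
    intro p
    rw [hB₀]
    have h1 : (0:ℝ) ≤ c p.1 p.1 := hc p.1
    set a : W := D p.1 with ha
    set b : W := j p.2 with hb
    have hna : ‖a‖ = ‖p.1‖ := D.norm_map p.1
    have h2 : ⟪H (a - b), a - b⟫ ≥ H₀ * ‖a - b‖ ^ 2 := hH _
    have h3 : ⟪K b, b⟫ ≥ K₀ * ‖b‖ ^ 2 := hK _
    have h4 : ⟪A (E p.2), E p.2⟫ ≥ A₀ * ‖E p.2‖ ^ 2 := hA _
    have hsub : ‖a - b‖ ^ 2 = ‖a‖ ^ 2 - 2 * ⟪a, b⟫ + ‖b‖ ^ 2 := by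
      rw [norm_sub_sq_real]
    have hip : ⟪a, b⟫ ≤ ‖a‖ * ‖b‖ := real_inner_le_norm a b
    have hamgm : 2 * (‖a‖ * ‖b‖) ≤ ε * ‖a‖ ^ 2 + (1 / ε) * ‖b‖ ^ 2 := by
      have h1' : 2 * (‖a‖ * ‖b‖) * ε ≤ ε * ‖a‖ ^ 2 * ε + ‖b‖ ^ 2 := by
        nlinarith [sq_nonneg (ε * ‖a‖ - ‖b‖)]
      have h2' : (1 / ε) * ‖b‖ ^ 2 = ‖b‖ ^ 2 / ε := by ring
      rw [h2', ← sub_le_iff_le_add', le_div_iff₀ hε₀]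
      nlinarith
    have hsub' : ‖a - b‖ ^ 2 ≥ (1 - ε) * ‖a‖ ^ 2 + (1 - 1 / ε) * ‖b‖ ^ 2 := by
      nlinarith
    rw [hna] at hsub'
    have hgnorm : ‖p.2‖ ^ 2 = ‖b‖ ^ 2 + ‖E p.2‖ ^ 2 := hG p.2
    have hCa : C₀ ≤ H₀ * (1 - ε) := le_trans (min_le_left _ _) (min_le_left _ _)
    have hCb : C₀ ≤ K₀ + H₀ * (1 - 1 / ε) := le_trans (min_le_left _ _) (min_le_right _ _)
    have hCc : C₀ ≤ A₀ := min_le_right _ _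
    nlinarith [h1, h2, h3, h4,
      mul_le_mul_of_nonneg_left hsub' hH₀.le,
      mul_le_mul_of_nonneg_right hCa (sq_nonneg ‖p.1‖),
      mul_le_mul_of_nonneg_right hCb (sq_nonneg ‖b‖),
      mul_le_mul_of_nonneg_right hCc (sq_nonneg ‖E p.2‖)]
  have coercive : IsCoercive B := by
    refine ⟨C₀, hC₀pos, fun u => ?_⟩
    have hnorm : ‖u‖ ^ 2 = ‖(e u).1‖ ^ 2 + ‖(e u).2‖ ^ 2 := by
      exact WithLp.prod_norm_sq_eq_of_L2 u
    rw [hB]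
    calc C₀ * ‖u‖ * ‖u‖ = C₀ * (‖(e u).1‖ ^ 2 + ‖(e u).2‖ ^ 2) := by
          rw [← hnorm]; ring
      _ ≤ B₀ (e u) (e u) := key (e u)
  -- Lax–Milgram
  let M := coercive.continuousLinearEquivOfBilin
  let μ : V := (InnerProductSpace.toDual ℝ V).symm (ℓ.comp (e : V →L[ℝ] Φ × G))
  have hμ : ∀ w : V, ⟪μ, w⟫ = ℓ (e w) := fun w =>
    InnerProductSpace.toDual_symm_apply
  refine ⟨e (M.symm μ), ?_, ?_⟩
  · intro q
    rw [← hB₀]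
    have h : B₀ (e (M.symm μ)) q = B (M.symm μ) (e.symm q) := by
      rw [hB]; simp
    rw [h, ← coercive.continuousLinearEquivOfBilin_apply (M.symm μ) (e.symm q)]
    show ⟪M (M.symm μ), e.symm q⟫ = _
    rw [M.apply_symm_apply, hμ]
    simp
  · intro p hp
    have hMp : M (e.symm p) = μ := by
      apply ext_inner_right ℝ
      intro w
      rw [coercive.continuousLinearEquivOfBilin_apply, hμ, hB]
      simp only [ContinuousLinearEquiv.apply_symm_apply]
      rw [hB₀]
      exact hp (e w)
    have h2 : e.symm p = M.symm μ := by rw [← hMp, M.symm_apply_apply]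
    rw [← h2, ContinuousLinearEquiv.apply_symm_apply]
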